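/- Let q ∈ ℂ[z,w] have no zeros on 𝕋² at points with first coordinate z₀ (z₀ ∈ 𝕋 fixed), and let μ be the measure |q|^{-2}dσ on 𝕋². If f ∈ ℂ[z,w] and (z−z₀)f ∈ L²(μ), then f ∈ L²(μ). -/

import Mathlib

open MeasureTheory Real MvPolynomial

theorem linear_factor_is_divisor_of_bernstein_szego_ideal
    (q f : MvPolynomial (Fin 2) ℂ) (z₀ : ℂ) (hz₀ : ‖z₀‖ = 1)
    -- q has no zeros on 𝕋² at points with first coordinate z₀
    (hq : ∀ w : ℂ, ‖w‖ = 1 → MvPolynomial.eval (![z₀, w]) q ≠ 0)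
    (T : ℝ × ℝ → Fin 2 → ℂ)
    (hT : ∀ p : ℝ × ℝ, T p = ![Complex.exp (p.1 * Complex.I), Complex.exp (p.2 * Complex.I)])
    -- (z - z₀)·f belongs to L²(|q|⁻² dσ)
    (hmem : IntegrableOn
      (fun p : ℝ × ℝ =>
        ‖MvPolynomial.eval (T p)
          ((MvPolynomial.X 0 - MvPolynomial.C z₀) * f)‖ ^ 2 /
          ‖MvPolynomial.eval (T p) q‖ ^ 2)
      (Set.Icc 0 (2 * π) ×ˢ Set.Icc 0 (2 * π)) volume) :
    -- then f itself belongs to L²(|q|⁻² dσ)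
    IntegrableOn
      (fun p : ℝ × ℝ => ‖MvPolynomial.eval (T p) f‖ ^ 2 /
        ‖MvPolynomial.eval (T p) q‖ ^ 2)
      (Set.Icc 0 (2 * π) ×ˢ Set.Icc 0 (2 * π)) volume := by
  set S : Set (ℝ × ℝ) := Set.Icc 0 (2 * π) ×ˢ Set.Icc 0 (2 * π) with hSdef
  have hTc : Continuous T := by
    have hTe : T = fun p => ![Complex.exp (p.1 * Complex.I), Complex.exp (p.2 * Complex.I)] :=
      funext hT
    rw [hTe]
    refine continuous_pi fun i => ?_
    fin_cases i <;> simp <;> fun_prop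
  have habs1 : ∀ p : ℝ × ℝ, ‖T p 1‖ = 1 := by
    intro p; rw [hT]; simp [Complex.norm_exp]
  have hTsplit : ∀ p, T p = ![T p 0, T p 1] := by
    intro p
    funext i
    fin_cases i <;> simp
  have hcS : IsCompact S := isCompact_Icc.prod isCompact_Icc
  have hSmeas : MeasurableSet S := measurableSet_Icc.prod measurableSet_Icc
  have hSne : S.Nonempty := by
    refine ⟨(0, 0), ?_⟩
    constructor <;> exact Set.mem_Icc.mpr ⟨le_refl 0, by positivity⟩
  -- the auxiliary continuous function
  set φ : ℝ × ℝ → ℝ :=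
    fun p => ‖MvPolynomial.eval (T p) q‖ + ‖T p 0 - z₀‖ with hφdef
  have hφc : Continuous φ := by
    apply Continuous.add
    · exact continuous_norm.comp ((MvPolynomial.continuous_eval q).comp hTc)
    · exact continuous_norm.comp (((continuous_apply (0 : Fin 2)).comp hTc).sub
        continuous_const)
  have hφpos : ∀ p, 0 < φ p := by
    intro p
    rcases eq_or_ne (T p 0) z₀ with h | h
    · have : MvPolynomial.eval (T p) q ≠ 0 := by
        rw [hTsplit p, h]
        exact hq (T p 1) (habs1 p)
      have h1 : 0 < ‖MvPolynomial.eval (T p) q‖ :=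
        norm_pos_iff.mpr this
      have h2 : 0 ≤ ‖T p 0 - z₀‖ := norm_nonneg _
      simp only [hφdef]; linarith
    · have h1 : 0 < ‖T p 0 - z₀‖ :=
        norm_pos_iff.mpr (sub_ne_zero.mpr h)
      have h2 : 0 ≤ ‖MvPolynomial.eval (T p) q‖ := norm_nonneg _
      simp only [hφdef]; linarith
  obtain ⟨p₀, hp₀S, hmin⟩ := hcS.exists_isMinOn hSne hφc.continuousOn
  set m : ℝ := φ p₀ with hmdef
  have hm : 0 < m := hφpos p₀
  set c : ℝ := m / 2 with hcdef
  have hc : 0 < c := by positivity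
  -- bound for |f|² on S
  obtain ⟨B, hB⟩ := hcS.exists_bound_of_continuousOn
    ((continuous_norm.comp ((MvPolynomial.continuous_eval f).comp hTc)).pow 2).continuousOn
  set B' : ℝ := max B 0 with hB'def
  have hB' : 0 ≤ B' := le_max_right _ _
  have hBbd : ∀ p ∈ S, ‖MvPolynomial.eval (T p) f‖ ^ 2 ≤ B' := by
    intro p hp
    have := hB p hp
    replace this : ‖‖MvPolynomial.eval (T p) f‖ ^ 2‖ ≤ B := this
    rw [Real.norm_eq_abs, abs_of_nonneg (by positivity : (0:ℝ) ≤ ‖MvPolynomial.eval (T p) f‖ ^ 2)] at this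
    exact this.trans (le_max_left _ _)
  -- the dominating function
  set g : ℝ × ℝ → ℝ := fun p =>
    ‖MvPolynomial.eval (T p) ((MvPolynomial.X 0 - MvPolynomial.C z₀) * f)‖ ^ 2 /
      ‖MvPolynomial.eval (T p) q‖ ^ 2 with hgdef
  have hgnn : ∀ p, 0 ≤ g p := fun p => by positivity
  have hbound_int : IntegrableOn (fun p => B' / c ^ 2 + (c⁻¹) ^ 2 * g p) S volume := by
    refine Integrable.add ?_ (hmem.const_mul _)
    exact (integrableOn_const_iff).mpr (Or.inr hcS.measure_lt_top)
  refine Integrable.mono' hbound_int ?_ ?_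
  · exact ((((continuous_norm.comp
        ((MvPolynomial.continuous_eval f).comp hTc)).pow 2).measurable).div
      (((continuous_norm.comp
        ((MvPolynomial.continuous_eval q).comp hTc)).pow 2).measurable)).aestronglyMeasurable
  · rw [ae_restrict_iff' hSmeas]
    refine ae_of_all _ fun p hp => ?_
    set a : ℝ := ‖MvPolynomial.eval (T p) f‖ ^ 2 with hadef
    set b : ℝ := ‖MvPolynomial.eval (T p) q‖ ^ 2 with hbdef
    set d : ℝ := ‖T p 0 - z₀‖ with hddef
    have ha : 0 ≤ a := by positivity
    have hb : 0 ≤ b := by positivity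
    have hd : 0 ≤ d := norm_nonneg _
    have hgp : g p = d ^ 2 * (a / b) := by
      simp only [hgdef, map_mul, eval_sub, eval_X, eval_C, norm_mul,
        mul_pow, hadef, hbdef, hddef, mul_div_assoc]
    have hnorm : ‖a / b‖ = a / b := by
      rw [Real.norm_eq_abs, abs_of_nonneg (by positivity)]
    rw [hnorm, hgp]
    have hM : 0 ≤ B' / c ^ 2 := by positivity
    rcases le_or_gt c d with hcd | hcd
    · -- far from z₀ : dominate by the second term
      have h1 : c ^ 2 * (a / b) ≤ d ^ 2 * (a / b) := by
        have : c ^ 2 ≤ d ^ 2 := by nlinarith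
        exact mul_le_mul_of_nonneg_right this (by positivity)
      have h2 : a / b ≤ (c⁻¹) ^ 2 * (d ^ 2 * (a / b)) := by
        have hc2 : (0:ℝ) < c ^ 2 := by positivity
        rw [inv_pow]
        calc a / b = (c ^ 2)⁻¹ * (c ^ 2 * (a / b)) := by
              field_simp
          _ ≤ (c ^ 2)⁻¹ * (d ^ 2 * (a / b)) :=
              mul_le_mul_of_nonneg_left h1 (by positivity)
      linarith
    · -- close to z₀ : q is bounded below
      have hqlb : c ≤ ‖MvPolynomial.eval (T p) q‖ := by
        have h1 : m ≤ φ p := hmin hp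
        have h2 : φ p = ‖MvPolynomial.eval (T p) q‖ + d := rfl
        rw [h2] at h1
        have h3 : d < c := hcd
        have h5 : c = m / 2 := hcdef
        clear_value m c d
        linarith
      have hblb : c ^ 2 ≤ b := by
        rw [hbdef]
        exact pow_le_pow_left₀ hc.le hqlb 2
      have h3 : a / b ≤ B' / c ^ 2 :=
        div_le_div₀ hB' (hBbd p hp) (by positivity) hblb
      have h4 : 0 ≤ (c⁻¹) ^ 2 * (d ^ 2 * (a / b)) := by positivity
      linarith
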